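/- If a category A has all small colimits and every continuous presheaf on A (i.e. functor A^op → Set sending colimits in A to limits in Set) is representable, then A has all small limits. -/
import Mathlib


open CategoryTheory Limits

universe v u

lemma limit_preservesLimits {A : Type u} [Category.{v} A] {J : Type v} [Category.{v} J]
    (D : J ⥤ (Aᵒᵖ ⥤ Type v)) (hD : ∀ j, PreservesLimits (D.obj j)) :
    PreservesLimits (limit D) := by
  have : PreservesLimits D.flip := by
    apply preservesLimits_of_evaluation
    intro j
    exact preservesLimits_of_natIso (flipCompEvaluation D j).symm
  have : PreservesLimits (D.flip ⋙ lim) := comp_preservesLimits _ _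
  exact preservesLimits_of_natIso (limitIsoFlipCompLim D).symm

/-- If a category `A` has all small colimits and every continuous presheaf on `A`
(i.e. functor `Aᵒᵖ ⥤ Type` sending colimits in `A` to limits in `Set`, equivalently
preserving limits of `Aᵒᵖ`) is representable, then `A` has all small limits. -/
theorem stmt0 {A : Type u} [Category.{v} A] [HasColimits A]
    (h : ∀ F : Aᵒᵖ ⥤ Type v, PreservesLimits F → F.IsRepresentable) :
    HasLimits A := by
  constructor
  intro J hJ
  constructor
  intro K
  -- the presheaf `X ↦ lim_j Hom(X, K j)`
  let F : Aᵒᵖ ⥤ Type v := limit (K ⋙ yoneda)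
  have hF : PreservesLimits F :=
    limit_preservesLimits (K ⋙ yoneda) (fun j => inferInstanceAs (PreservesLimits (yoneda.obj (K.obj j))))
  have : F.IsRepresentable := h F hF
  -- transport the limit cone along the representing isomorphism
  let e : yoneda.obj F.reprX ≅ F := Functor.reprW F
  let c : Cone (K ⋙ yoneda) :=
    (limit.cone (K ⋙ yoneda)).extend e.hom
  have hc : IsLimit c :=
    (limit.isLimit (K ⋙ yoneda)).extendIso e.hom
  -- lift the cone through the fully faithful yoneda embedding
  let c' : Cone K :=
    { pt := F.reprX
      π :=
        { app := fun j => Yoneda.fullyFaithful.preimage (c.π.app j)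
          naturality := fun i j f => Yoneda.fullyFaithful.map_injective (by
            simp only [Functor.map_comp, Functor.FullyFaithful.map_preimage]
            simpa using c.π.naturality f) } }
  have : IsLimit (yoneda.mapCone c') := by
    refine IsLimit.ofIsoLimit hc (Cones.ext (Iso.refl _) (fun j => ?_))
    simp [c', Functor.FullyFaithful.map_preimage]
  exact HasLimit.mk ⟨c', isLimitOfReflects yoneda this⟩
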